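/- Let Q be a quandle with associated group As(Q) (presented by generators Q and relations x·y = y·(x*y)) and canonical map ι : Q → As(Q). Define two binary operations on As(Q) × Q by (g,a) ub (h,b) := (g·ι(b), a*b) and (g,a) ob (h,b) := (h·ι(b)·h⁻¹·g, a). Then (As(Q) × Q, ub, ob) is a biquandle: it satisfies (BQ1), (BQ2) (including bijectivity of the map H), and the three identities (BQ3). -/

import Mathlib

/-- A biquandle: a set with two binary operations `ub` (under) and `ob` (over)
satisfying the biquandle axioms (BQ1), (BQ2), (BQ3). -/
structure Biquandle (X : Type*) where
  ub : X → X → X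
  ob : X → X → X
  bq1 : ∀ x, ub x x = ob x x
  ub_bij : ∀ y, Function.Bijective fun x => ub x y
  ob_bij : ∀ y, Function.Bijective fun x => ob x y
  H_bij : Function.Bijective fun p : X × X => (ob p.2 p.1, ub p.1 p.2)
  bq3_ub : ∀ x y z, ub (ub x y) (ub z y) = ub (ub x z) (ob y z)
  bq3_ob : ∀ x y z, ob (ob x y) (ob z y) = ob (ob x z) (ub y z)
  bq3_mix : ∀ x y z, ob (ub x y) (ub z y) = ub (ob x z) (ob y z)

/-- A quandle: a set with a binary operation `*` (written `op`) that is idempotent,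
has bijective right translations, and is right self-distributive. -/
structure QuandleR (Q : Type*) where
  op : Q → Q → Q
  idem : ∀ a, op a a = a
  op_bij : ∀ b, Function.Bijective fun a => op a b
  distrib : ∀ a b c, op (op a b) c = op (op a c) (op b c)

/-- Relations of the associated group `As(Q)` of a quandle: `x · y = y · (x * y)`. -/
def QuandleR.rels {Q : Type*} (q : QuandleR Q) : Set (FreeGroup Q) :=
  {r | ∃ a b : Q, r = FreeGroup.of a * FreeGroup.of b *
      (FreeGroup.of b * FreeGroup.of (q.op a b))⁻¹}

lemma horvat_key {Q : Type*} (q : QuandleR Q) (a b : Q) :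
    (PresentedGroup.of a * PresentedGroup.of b : PresentedGroup q.rels)
      = PresentedGroup.of b * PresentedGroup.of (q.op a b) := by
  have h : (FreeGroup.of a * FreeGroup.of b *
      (FreeGroup.of b * FreeGroup.of (q.op a b))⁻¹) ∈
      Subgroup.normalClosure q.rels :=
    Subgroup.subset_normalClosure ⟨a, b, rfl⟩
  have h1 : (QuotientGroup.mk (FreeGroup.of a * FreeGroup.of b *
      (FreeGroup.of b * FreeGroup.of (q.op a b))⁻¹) :
      PresentedGroup q.rels) = 1 := (QuotientGroup.eq_one_iff _).2 h
  have h2 : (PresentedGroup.of a * PresentedGroup.of b) *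
      (PresentedGroup.of b * PresentedGroup.of (q.op a b))⁻¹
        = (1 : PresentedGroup q.rels) := by
    exact h1
  exact mul_inv_eq_one.mp h2

lemma horvat_key' {Q : Type*} (q : QuandleR Q) (a b : Q) :
    (PresentedGroup.of (q.op a b) : PresentedGroup q.rels)
      = (PresentedGroup.of b)⁻¹ * PresentedGroup.of a * PresentedGroup.of b := by
  rw [mul_assoc, horvat_key q a b]
  group

/-- For a quandle `Q`, the operations `(g,a) ub (h,b) := (g·ι(b), a*b)` and
`(g,a) ob (h,b) := (h·ι(b)·h⁻¹·g, a)` make `As(Q) × Q` a biquandle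
(the algebraic model of Horvat's topological biquandle). -/
theorem horvat_biquandle {Q : Type*} (q : QuandleR Q) :
    ∃ B : Biquandle (PresentedGroup q.rels × Q),
      (∀ p r : PresentedGroup q.rels × Q,
        B.ub p r = (p.1 * PresentedGroup.of r.2, q.op p.2 r.2)) ∧
      (∀ p r : PresentedGroup q.rels × Q,
        B.ob p r = (r.1 * PresentedGroup.of r.2 * r.1⁻¹ * p.1, p.2)) := by
  classical
  let e : Q → Q ≃ Q := fun b => Equiv.ofBijective _ (q.op_bij b)
  have he : ∀ a b, e b a = q.op a b := fun a b => rfl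
  refine ⟨⟨
    (fun p r => (p.1 * PresentedGroup.of r.2, q.op p.2 r.2)),
    (fun p r => (r.1 * PresentedGroup.of r.2 * r.1⁻¹ * p.1, p.2)),
    ?_, ?_, ?_, ?_, ?_, ?_, ?_⟩, fun p r => rfl, fun p r => rfl⟩
  · -- bq1
    rintro ⟨g, a⟩
    refine Prod.ext ?_ ?_
    · show g * PresentedGroup.of a = g * PresentedGroup.of a * g⁻¹ * g
      group
    · exact q.idem a
  · -- ub_bij
    rintro ⟨h, b⟩
    refine Function.bijective_iff_has_inverse.mpr
      ⟨fun p => (p.1 * (PresentedGroup.of b)⁻¹, (e b).symm p.2), ?_, ?_⟩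
    · rintro ⟨g, a⟩
      refine Prod.ext ?_ ?_
      · show g * PresentedGroup.of b * (PresentedGroup.of b)⁻¹ = g
        group
      · show (e b).symm (q.op a b) = a
        rw [← he a b]; exact (e b).symm_apply_apply a
    · rintro ⟨g, a⟩
      refine Prod.ext ?_ ?_
      · show g * (PresentedGroup.of b)⁻¹ * PresentedGroup.of b = g
        group
      · show q.op ((e b).symm a) b = a
        rw [← he ((e b).symm a) b]; exact (e b).apply_symm_apply a
  · -- ob_bij
    rintro ⟨h, b⟩
    refine Function.bijective_iff_has_inverse.mpr
      ⟨fun p => ((h * PresentedGroup.of b * h⁻¹)⁻¹ * p.1, p.2), ?_, ?_⟩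
    · rintro ⟨g, a⟩
      refine Prod.ext ?_ ?_
      · show (h * PresentedGroup.of b * h⁻¹)⁻¹ *
          (h * PresentedGroup.of b * h⁻¹ * g) = g
        group
      · rfl
    · rintro ⟨g, a⟩
      refine Prod.ext ?_ ?_
      · show h * PresentedGroup.of b * h⁻¹ *
          ((h * PresentedGroup.of b * h⁻¹)⁻¹ * g) = g
        group
      · rfl
  · -- H_bij
    refine Function.bijective_iff_has_inverse.mpr
      ⟨fun s =>
        ((s.2.1 * (PresentedGroup.of s.1.2)⁻¹, (e s.1.2).symm s.2.2),
         ((s.2.1 * (PresentedGroup.of s.1.2)⁻¹) *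
           PresentedGroup.of ((e s.1.2).symm s.2.2) *
           (s.2.1 * (PresentedGroup.of s.1.2)⁻¹)⁻¹)⁻¹ * s.1.1, s.1.2), ?_, ?_⟩
    · rintro ⟨⟨g, a⟩, ⟨h, b⟩⟩
      have ha : (e b).symm (q.op a b) = a := by
        rw [← he a b]; exact (e b).symm_apply_apply a
      have hg : g * PresentedGroup.of b * (PresentedGroup.of b)⁻¹ = g := by group
      refine Prod.ext (Prod.ext ?_ ?_) (Prod.ext ?_ ?_)
      · show g * PresentedGroup.of b * (PresentedGroup.of b)⁻¹ = g
        exact hg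
      · exact ha
      · show ((g * PresentedGroup.of b * (PresentedGroup.of b)⁻¹) *
           PresentedGroup.of ((e b).symm (q.op a b)) *
           (g * PresentedGroup.of b * (PresentedGroup.of b)⁻¹)⁻¹)⁻¹ *
          (g * PresentedGroup.of a * g⁻¹ * h) = h
        rw [ha]; group
      · rfl
    · rintro ⟨⟨u, b⟩, ⟨v, c⟩⟩
      have hc : q.op ((e b).symm c) b = c := by
        rw [← he ((e b).symm c) b]; exact (e b).apply_symm_apply c
      refine Prod.ext (Prod.ext ?_ ?_) (Prod.ext ?_ ?_)
      · show (v * (PresentedGroup.of b)⁻¹) *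
          PresentedGroup.of ((e b).symm c) * (v * (PresentedGroup.of b)⁻¹)⁻¹ *
          (((v * (PresentedGroup.of b)⁻¹) *
            PresentedGroup.of ((e b).symm c) *
            (v * (PresentedGroup.of b)⁻¹)⁻¹)⁻¹ * u) = u
        group
      · rfl
      · show v * (PresentedGroup.of b)⁻¹ * PresentedGroup.of b = v
        group
      · exact hc
  · -- bq3_ub
    rintro ⟨g, a⟩ ⟨h, b⟩ ⟨k, c⟩
    refine Prod.ext ?_ ?_
    · show g * PresentedGroup.of b * PresentedGroup.of (q.op c b)
        = g * PresentedGroup.of c * PresentedGroup.of b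
      rw [horvat_key' q c b]; group
    · exact (q.distrib a c b).symm
  · -- bq3_ob
    rintro ⟨g, a⟩ ⟨h, b⟩ ⟨k, c⟩
    refine Prod.ext ?_ ?_
    · show (h * PresentedGroup.of b * h⁻¹ * k) * PresentedGroup.of c *
          (h * PresentedGroup.of b * h⁻¹ * k)⁻¹ *
          (h * PresentedGroup.of b * h⁻¹ * g)
        = (h * PresentedGroup.of c) * PresentedGroup.of (q.op b c) *
          (h * PresentedGroup.of c)⁻¹ *
          (k * PresentedGroup.of c * k⁻¹ * g)
      rw [horvat_key' q b c]; group
    · rfl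
  · -- bq3_mix
    rintro ⟨g, a⟩ ⟨h, b⟩ ⟨k, c⟩
    refine Prod.ext ?_ ?_
    · show (k * PresentedGroup.of b) * PresentedGroup.of (q.op c b) *
          (k * PresentedGroup.of b)⁻¹ * (g * PresentedGroup.of b)
        = (k * PresentedGroup.of c * k⁻¹ * g) * PresentedGroup.of b
      rw [horvat_key' q c b]; group
    · rfl
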